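/- Let u₁, u₂ : ℝ → (0,∞) be continuous, strictly positive, integrable functions with ∫u₁ = ∫u₂ = 1, and let α ∈ (0,1). For h ∈ [0,1] set u_h = u₁ + h(u₂ − u₁) (which is strictly positive with total integral 1) and let ω(h) = Q_α(u_h) be its α-quantile. Then ω is differentiable on [0,1] and for every h ∈ [0,1]: ω'(h) = − [u₁(ω(h)) + h(u₂(ω(h)) − u₁(ω(h)))]^{−1} ∫_{−∞}^{ω(h)} (u₂(x) − u₁(x)) dx. -/

import Mathlib

open MeasureTheory Real Set Filter Topology

private lemma ftc_Iic {f : ℝ → ℝ} (hc : Continuous f) (hi : Integrable f) (y : ℝ) :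
    HasDerivAt (fun t => ∫ x in Iic t, f x) (f y) y := by
  have key : ∀ t : ℝ, ∫ x in Iic t, f x = (∫ x in Iic (0:ℝ), f x) + ∫ x in (0:ℝ)..t, f x := by
    intro t
    rw [← intervalIntegral.integral_Iic_sub_Iic hi.integrableOn hi.integrableOn]
    ring
  have h2 := ((hc.integral_hasStrictDerivAt 0 y).hasDerivAt).const_add (∫ x in Iic (0:ℝ), f x)
  have heq : (fun t => (∫ x in Iic (0:ℝ), f x) + ∫ x in (0:ℝ)..t, f x)
      = fun t => ∫ x in Iic t, f x := funext fun t => (key t).symm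
  rwa [heq] at h2

private lemma strictMono_Iic {f : ℝ → ℝ} (hi : Integrable f)
    (hp : ∀ x, 0 < f x) : StrictMono (fun t => ∫ x in Iic t, f x) := by
  intro a b hab
  have h1 : (∫ x in Iic b, f x) - ∫ x in Iic a, f x = ∫ x in a..b, f x :=
    intervalIntegral.integral_Iic_sub_Iic hi.integrableOn hi.integrableOn
  have h2 : 0 < ∫ x in a..b, f x :=
    intervalIntegral.intervalIntegral_pos_of_pos hi.intervalIntegrable hp hab
  simp only
  linarith

private lemma Iic_mem_Ioo {f : ℝ → ℝ} (hi : Integrable f)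
    (hp : ∀ x, 0 < f x) (y : ℝ) :
    (∫ x in Iic y, f x) ∈ Ioo 0 (∫ x, f x) := by
  have hm := strictMono_Iic hi hp
  constructor
  · have h1 : (0:ℝ) ≤ ∫ x in Iic (y-1), f x :=
      setIntegral_nonneg measurableSet_Iic fun x _ => (hp x).le
    have h2 := hm (show y - 1 < y by linarith)
    simp only at h2
    linarith
  · have h1 : (∫ x in Iic (y+1), f x) + ∫ x in Ioi (y+1), f x = ∫ x, f x :=
      intervalIntegral.integral_Iic_add_Ioi hi.integrableOn hi.integrableOn
    have h2 : (0:ℝ) ≤ ∫ x in Ioi (y+1), f x :=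
      setIntegral_nonneg measurableSet_Ioi fun x _ => (hp x).le
    have h3 := hm (show y < y + 1 by linarith)
    simp only at h3
    linarith

private lemma exists_integral_Iic_eq {f : ℝ → ℝ} (hc : Continuous f) (hi : Integrable f)
    (hp : ∀ x, 0 < f x) {z : ℝ} (h0 : 0 < z) (h1 : z < ∫ x, f x) :
    ∃ y, ∫ x in Iic y, f x = z := by
  set Φ := fun t => ∫ x in Iic t, f x with hΦ
  have hcontΦ : Continuous Φ := continuous_iff_continuousAt.2 fun t => (ftc_Iic hc hi t).continuousAt
  have htop : Tendsto Φ atTop (𝓝 (∫ x, f x)) :=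
    (aecover_Iic tendsto_id).integral_tendsto_of_countably_generated hi
  have hbot : Tendsto Φ atBot (𝓝 0) := by
    have h2 : Tendsto (fun t : ℝ => ∫ x in Ioi t, f x) atBot (𝓝 (∫ x, f x)) :=
      (aecover_Ioi tendsto_id).integral_tendsto_of_countably_generated hi
    have h3 : ∀ t : ℝ, Φ t = (∫ x, f x) - ∫ x in Ioi t, f x := by
      intro t
      rw [← intervalIntegral.integral_Iic_add_Ioi hi.integrableOn hi.integrableOn]
      ring
    have h4 : Tendsto (fun t : ℝ => (∫ x, f x) - ∫ x in Ioi t, f x) atBot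
        (𝓝 ((∫ x, f x) - ∫ x, f x)) := tendsto_const_nhds.sub h2
    rw [sub_self] at h4
    exact h4.congr fun t => (h3 t).symm
  obtain ⟨a, ha⟩ := (hbot.eventually_lt_const h0).exists
  obtain ⟨b, hb⟩ := (htop.eventually_const_lt h1).exists
  have hab : a ≤ b := le_of_lt ((strictMono_Iic hi hp).lt_iff_lt.1 (lt_trans ha hb))
  obtain ⟨y, _, hy⟩ := intermediate_value_Icc hab hcontΦ.continuousOn ⟨ha.le, hb.le⟩
  exact ⟨y, hy⟩

/-- Let `u_h = u₁ + h (u₂ - u₁)` for `h ∈ [0,1]` and let `ω(h) = Q_α(u_h)`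
be its `α`-quantile, i.e. `∫_{-∞}^{ω(h)} u_h = α`. Then `ω` is differentiable on `[0,1]` with
`ω'(h) = -[u₁(ω(h)) + h (u₂(ω(h)) - u₁(ω(h)))]⁻¹ ∫_{-∞}^{ω(h)} (u₂ - u₁)`. -/
theorem quantile_derivative_along_segment
    (u₁ u₂ : ℝ → ℝ)
    (h₁c : Continuous u₁) (h₂c : Continuous u₂)
    (h₁p : ∀ x, 0 < u₁ x) (h₂p : ∀ x, 0 < u₂ x)
    (h₁i : Integrable u₁) (h₂i : Integrable u₂)
    (h₁m : ∫ x, u₁ x = 1) (h₂m : ∫ x, u₂ x = 1)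
    (α : ℝ) (hα : α ∈ Ioo (0 : ℝ) 1)
    (ω : ℝ → ℝ)
    (hω : ∀ h ∈ Icc (0 : ℝ) 1, ∫ x in Iic (ω h), (u₁ x + h * (u₂ x - u₁ x)) = α) :
    ∀ h ∈ Icc (0 : ℝ) 1,
      HasDerivWithinAt ω
        (-(u₁ (ω h) + h * (u₂ (ω h) - u₁ (ω h)))⁻¹ * ∫ x in Iic (ω h), (u₂ x - u₁ x))
        (Icc (0 : ℝ) 1) h := by
  have hd : Continuous (fun x => u₂ x - u₁ x) := h₂c.sub h₁c
  have hdi : Integrable (fun x => u₂ x - u₁ x) := h₂i.sub h₁i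
  set G₁ : ℝ → ℝ := fun t => ∫ x in Iic t, u₁ x with hG₁
  set G₂ : ℝ → ℝ := fun t => ∫ x in Iic t, (u₂ x - u₁ x) with hG₂def
  have hlin : ∀ (h' t : ℝ),
      ∫ x in Iic t, (u₁ x + h' * (u₂ x - u₁ x)) = G₁ t + h' * G₂ t := by
    intro h' t
    rw [integral_add h₁i.integrableOn ((hdi.const_mul h').integrableOn),
      integral_const_mul h' fun x => u₂ x - u₁ x]
  intro h hh
  set v : ℝ → ℝ := fun x => u₁ x + h * (u₂ x - u₁ x) with hv
  have hvc : Continuous v := h₁c.add (continuous_const.mul hd)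
  have hvp : ∀ x, 0 < v x := by
    intro x
    rcases eq_or_lt_of_le hh.1 with h0 | h0
    · simp only [hv, ← h0, zero_mul, add_zero]
      exact h₁p x
    · have e : v x = (1 - h) * u₁ x + h * u₂ x := by simp only [hv]; ring
      rw [e]
      have l1 : 0 ≤ (1 - h) * u₁ x := mul_nonneg (by linarith [hh.2]) (h₁p x).le
      have l2 : 0 < h * u₂ x := mul_pos h0 (h₂p x)
      linarith
  have hvi : Integrable v := h₁i.add (hdi.const_mul h)
  set Φ : ℝ → ℝ := fun t => ∫ x in Iic t, v x with hΦdef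
  have hΦlin : ∀ t, Φ t = G₁ t + h * G₂ t := fun t => hlin h t
  have hΦd : ∀ y, HasDerivAt Φ (v y) y := ftc_Iic hvc hvi
  have hΦmono : StrictMono Φ := strictMono_Iic hvi hvp
  have hΦtot : ∫ x, v x = 1 := by
    rw [integral_add h₁i (hdi.const_mul h), integral_const_mul h fun x => u₂ x - u₁ x,
      integral_sub h₂i h₁i, h₁m, h₂m]
    ring
  have hrange : ∀ t, Φ t ∈ Ioo (0:ℝ) 1 := by
    intro t
    have := Iic_mem_Ioo hvi hvp t
    rwa [hΦtot] at this
  have hωh : Φ (ω h) = α := hω h hh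
  have hexists : ∀ z ∈ Ioo (0:ℝ) 1, ∃ y, Φ y = z := by
    intro z hz
    exact exists_integral_Iic_eq hvc hvi hvp hz.1 (by rw [hΦtot]; exact hz.2)
  classical
  set ψ : ℝ → ℝ := fun z => if hz : ∃ y, Φ y = z then hz.choose else 0 with hψdef
  have hψ : ∀ z ∈ Ioo (0:ℝ) 1, Φ (ψ z) = z := by
    intro z hz
    have he := hexists z hz
    simp only [hψdef, dif_pos he]
    exact he.choose_spec
  have hψleft : ∀ w, ψ (Φ w) = w := fun w => hΦmono.injective (hψ _ (hrange w))
  have hψα : ψ α = ω h := by rw [← hωh, hψleft]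
  -- continuity of ψ at α
  have hψcont : ContinuousAt ψ α := by
    rw [Metric.continuousAt_iff]
    intro ε hε
    set y := ψ α with hy0
    have hy : Φ y = α := hψ α hα
    have h1 : Φ (y - ε) < α := by rw [← hy]; exact hΦmono (by linarith)
    have h2 : α < Φ (y + ε) := by rw [← hy]; exact hΦmono (by linarith)
    refine ⟨min (Φ (y + ε) - α) (α - Φ (y - ε)), by simp [lt_min_iff]; constructor <;> linarith, ?_⟩
    intro z hz
    rw [Real.dist_eq] at hz ⊢
    have hz' := abs_lt.1 hz
    have hz1 : Φ (y - ε) < z := by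
      have := min_le_right (Φ (y + ε) - α) (α - Φ (y - ε))
      linarith [hz'.1]
    have hz2 : z < Φ (y + ε) := by
      have := min_le_left (Φ (y + ε) - α) (α - Φ (y - ε))
      linarith [hz'.2]
    have hzIoo : z ∈ Ioo (0:ℝ) 1 := ⟨lt_trans (hrange (y - ε)).1 hz1, lt_trans hz2 (hrange (y + ε)).2⟩
    have hΦz : Φ (ψ z) = z := hψ z hzIoo
    have l1 : y - ε < ψ z := by
      by_contra hcon
      push_neg at hcon
      have := hΦmono.monotone hcon
      rw [hΦz] at this
      linarith
    have l2 : ψ z < y + ε := by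
      by_contra hcon
      push_neg at hcon
      have := hΦmono.monotone hcon
      rw [hΦz] at this
      linarith
    rw [abs_lt]
    constructor <;> [linarith; linarith]
  have hψd : HasDerivAt ψ (v (ω h))⁻¹ α := by
    refine HasDerivAt.of_local_left_inverse (f := Φ) hψcont ?_ (ne_of_gt (hvp (ω h))) ?_
    · rw [hψα]; exact hΦd (ω h)
    · filter_upwards [Ioo_mem_nhds hα.1 hα.2] with z hz using hψ z hz
  -- the auxiliary map c
  set c : ℝ → ℝ := fun h' => α - (h' - h) * G₂ (ω h') with hcdef
  have hch : c h = α := by simp [hcdef]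
  have hkey : ∀ h' ∈ Icc (0:ℝ) 1, Φ (ω h') = c h' := by
    intro h' hh'
    have e1 : G₁ (ω h') + h' * G₂ (ω h') = α := by
      rw [← hlin h' (ω h')]; exact hω h' hh'
    rw [hΦlin]
    simp only [hcdef]
    nlinarith [e1]
  have hωc : ∀ h' ∈ Icc (0:ℝ) 1, ω h' = ψ (c h') := fun h' hh' => by
    rw [← hkey h' hh', hψleft]
  -- bound on G₂
  set M : ℝ := ∫ x, |u₂ x - u₁ x| with hM
  have hG₂bdd : ∀ t, |G₂ t| ≤ M := by
    intro t
    calc |G₂ t| ≤ ∫ x in Iic t, |u₂ x - u₁ x| := by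
          simpa [Real.norm_eq_abs] using
            norm_integral_le_integral_norm (μ := volume.restrict (Iic t)) (fun x => u₂ x - u₁ x)
      _ ≤ M := setIntegral_le_integral hdi.abs (Filter.Eventually.of_forall fun x => abs_nonneg _)
  have hctend : Filter.Tendsto c (nhdsWithin h (Icc (0:ℝ) 1)) (nhds α) := by
    have h0 : Filter.Tendsto (fun h' => c h' - α) (nhdsWithin h (Icc (0:ℝ) 1)) (nhds 0) := by
      apply squeeze_zero_norm (a := fun h' => M * |h' - h|)
      · intro h'
        have : c h' - α = -((h' - h) * G₂ (ω h')) := by simp only [hcdef]; ring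
        rw [this, norm_neg, Real.norm_eq_abs, abs_mul]
        exact mul_le_mul_of_nonneg_left (hG₂bdd (ω h')) (abs_nonneg _) |>.trans_eq (mul_comm _ _)
      · have : Filter.Tendsto (fun h' : ℝ => M * |h' - h|) (nhds h) (nhds (M * |h - h|)) :=
          (continuous_const.mul ((continuous_id.sub continuous_const).abs)).tendsto h
        simpa using this.mono_left nhdsWithin_le_nhds
    have h1 := h0.add (tendsto_const_nhds (x := α))
    simpa using h1
  have hωtend : Filter.Tendsto ω (nhdsWithin h (Icc (0:ℝ) 1)) (nhds (ω h)) := by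
    have h1 : Filter.Tendsto (fun h' => ψ (c h')) (nhdsWithin h (Icc (0:ℝ) 1)) (nhds (ψ α)) :=
      (hψcont.tendsto).comp hctend
    rw [hψα] at h1
    refine h1.congr' ?_
    filter_upwards [self_mem_nhdsWithin] with h' hh' using (hωc h' hh').symm
  have hG₂cont : Continuous G₂ :=
    continuous_iff_continuousAt.2 fun t => (ftc_Iic hd hdi t).continuousAt
  have hgtend : Filter.Tendsto (fun h' => G₂ (ω h')) (nhdsWithin h (Icc (0:ℝ) 1))
      (nhds (G₂ (ω h))) := (hG₂cont.continuousAt.tendsto).comp hωtend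
  have hcderiv : HasDerivWithinAt c (-(G₂ (ω h))) (Icc (0:ℝ) 1) h := by
    rw [hasDerivWithinAt_iff_tendsto_slope]
    have hmem : Icc (0:ℝ) 1 \ {h} ∈ nhdsWithin h (Icc (0:ℝ) 1 \ {h}) := self_mem_nhdsWithin
    refine Filter.Tendsto.congr' ?_
      ((hgtend.neg).mono_left (nhdsWithin_mono _ diff_subset))
    filter_upwards [hmem] with h' hh'
    have hne : h' - h ≠ 0 := sub_ne_zero.2 fun e => hh'.2 e
    rw [slope_def_field]
    simp only [hcdef, hch]
    field_simp
    ring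
  have hcomp : HasDerivWithinAt (fun h' => ψ (c h')) ((v (ω h))⁻¹ * -(G₂ (ω h)))
      (Icc (0:ℝ) 1) h := by
    have := HasDerivAt.comp_hasDerivWithinAt h (hch ▸ hψd) hcderiv
    exact this
  have hfinal := hcomp.congr (fun y hy => hωc y hy) (hωc h hh)
  refine hfinal.congr_deriv ?_
  have : G₂ (ω h) = ∫ x in Iic (ω h), (u₂ x - u₁ x) := rfl
  change (u₁ (ω h) + h * (u₂ (ω h) - u₁ (ω h)))⁻¹ * -(G₂ (ω h)) = -(u₁ (ω h) + h * (u₂ (ω h) - u₁ (ω h)))⁻¹ * G₂ (ω h)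
  ring
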